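/- For all C in the interval (2, ∞), the value K(0,C) satisfies π < K(0,C) < √2·π, where K(0,C) = ∫_{x₁}^{x₂} C⁻¹/(√u(1-u)√(-u² + u - C⁻²)) du and x₁ < x₂ are the roots of u² - u + C⁻² = 0. Consequently there is no integer m ≥ 2 with K(0,C) = 2π/m. -/

import Mathlib

set_option maxHeartbeats 1000000

open Real MeasureTheory Set intervalIntegral Filter

lemma denom_pos' {p q : ℝ} (hp : 0 < p) (hq : 0 < q) (θ : ℝ) :
    0 < p * Real.cos θ ^ 2 + q * Real.sin θ ^ 2 := by
  have h := Real.sin_sq_add_cos_sq θ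
  rcases eq_or_lt_of_le (sq_nonneg (Real.sin θ)) with h0 | h0
  · nlinarith
  · nlinarith [mul_pos hq h0, mul_nonneg hp.le (sq_nonneg (Real.cos θ))]

lemma integral_inv_trig (p q : ℝ) (hp : 0 < p) (hq : 0 < q) :
    ∫ θ in (0:ℝ)..(π/2), (p * Real.cos θ ^ 2 + q * Real.sin θ ^ 2)⁻¹
      = π / (2 * Real.sqrt (p * q)) := by
  set k : ℝ := Real.sqrt (q / p) with hk
  set s : ℝ := Real.sqrt (p * q) with hs
  have hkpos : 0 < k := Real.sqrt_pos.2 (div_pos hq hp)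
  have hspos : 0 < s := Real.sqrt_pos.2 (mul_pos hp hq)
  have hk2 : k ^ 2 = q / p := Real.sq_sqrt (div_pos hq hp).le
  have hskp : s = k * p := by
    rw [hk, hs, show p * q = q / p * p ^ 2 by field_simp,
      Real.sqrt_mul (div_pos hq hp).le, Real.sqrt_sq hp.le]
  set F : ℝ → ℝ := fun c => s⁻¹ * Real.arctan (k * Real.tan c) with hF
  have hfc : Continuous fun θ : ℝ => (p * Real.cos θ ^ 2 + q * Real.sin θ ^ 2)⁻¹ := by
    refine Continuous.inv₀ (by continuity) fun θ => (denom_pos' hp hq θ).ne'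
  have hderiv : ∀ c ∈ Ioo (0:ℝ) (π/2),
      HasDerivAt F ((p * Real.cos c ^ 2 + q * Real.sin c ^ 2)⁻¹) c := by
    intro c hc
    have hcos : 0 < Real.cos c := by
      apply Real.cos_pos_of_mem_Ioo
      constructor
      · linarith [hc.1, Real.pi_pos]
      · exact hc.2
    have htan := (Real.hasDerivAt_tan hcos.ne').const_mul k
    have harc := htan.arctan
    have := harc.const_mul s⁻¹
    refine this.congr_deriv ?_
    have h1 : Real.tan c = Real.sin c / Real.cos c := Real.tan_eq_sin_div_cos c
    have hd : 0 < p * Real.cos c ^ 2 + q * Real.sin c ^ 2 := denom_pos' hp hq c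
    rw [hskp]
    field_simp [h1, mul_pow]
    rw [hk2]
    field_simp
    rw [h1, div_pow]
    field_simp
  have hint : IntervalIntegrable (fun θ : ℝ => (p * Real.cos θ ^ 2 + q * Real.sin θ ^ 2)⁻¹)
      volume 0 (π/2) := hfc.intervalIntegrable _ _
  have h0 : Tendsto F (nhdsWithin 0 (Ioi 0)) (nhds 0) := by
    have hc : ContinuousAt F 0 := by
      have h := (Real.hasDerivAt_tan (x := 0) (by simp)).continuousAt
      exact continuousAt_const.mul
        (Real.continuous_arctan.continuousAt.comp (continuousAt_const.mul h))
    have h00 : F 0 = 0 := by simp [hF]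
    have := hc.tendsto.mono_left (nhdsWithin_le_nhds (s := Ioi (0:ℝ)))
    rwa [h00] at this
  have hb : Tendsto F (nhdsWithin (π/2) (Iio (π/2))) (nhds (s⁻¹ * (π/2))) := by
    have h1 : Tendsto (fun c => k * Real.tan c) (nhdsWithin (π/2) (Iio (π/2))) atTop :=
      Real.tendsto_tan_pi_div_two.const_mul_atTop hkpos
    have h2 : Tendsto (fun c => Real.arctan (k * Real.tan c))
        (nhdsWithin (π/2) (Iio (π/2))) (nhds (π/2)) :=
      (Real.tendsto_arctan_atTop.mono_right nhdsWithin_le_nhds).comp h1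
    exact h2.const_mul s⁻¹
  have := integral_eq_sub_of_hasDerivAt_of_tendsto (by positivity) hderiv hint h0 hb
  rw [this, sub_zero, eq_div_iff (by positivity)]
  field_simp

lemma subst_lemma (C a b : ℝ) (hC0 : 0 < C) (ha : 0 < a) (hab : a < b)
    (hsum : a + b = 1) (hprod : a * b = C⁻¹ ^ 2) :
    (∫ u in a..b, C⁻¹ / (Real.sqrt u * (1 - u) * Real.sqrt (-u ^ 2 + u - C⁻¹ ^ 2)))
      = ∫ θ in (0:ℝ)..(π/2),
          2 * C⁻¹ / ((b * Real.cos θ ^ 2 + a * Real.sin θ ^ 2) *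
            Real.sqrt (a * Real.cos θ ^ 2 + b * Real.sin θ ^ 2)) := by
  have hb : 0 < b := lt_trans ha hab
  set r : ℝ := b - a with hr
  have hrpos : 0 < r := by simp [hr]; linarith
  set φ : ℝ → ℝ := fun θ => a + r * Real.sin θ ^ 2 with hφ
  set φ' : ℝ → ℝ := fun θ => r * (2 * Real.sin θ * Real.cos θ) with hφ'
  set g : ℝ → ℝ := fun u =>
    C⁻¹ / (Real.sqrt u * (1 - u) * Real.sqrt (-u ^ 2 + u - C⁻¹ ^ 2)) with hg
  have hπ2 : (0:ℝ) < π / 2 := by positivity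
  -- derivative
  have hder : ∀ θ ∈ Ioo (0:ℝ) (π/2), HasDerivWithinAt φ (φ' θ) (Ioo (0:ℝ) (π/2)) θ := by
    intro θ hθ
    have h1 : HasDerivAt (fun θ : ℝ => Real.sin θ ^ 2)
        (2 * Real.sin θ ^ 1 * Real.cos θ) θ := (Real.hasDerivAt_sin θ).pow 2
    have h2 := (h1.const_mul r).const_add a
    have h3 : HasDerivAt φ (r * (2 * Real.sin θ ^ 1 * Real.cos θ)) θ := h2
    refine h3.hasDerivWithinAt.congr_deriv ?_
    simp only [hφ']
    ring
  -- strict monotonicity / injectivity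
  have hmono : StrictMonoOn φ (Icc (0:ℝ) (π/2)) := by
    intro x hx y hy hxy
    have hsx : Real.sin x < Real.sin y := by
      apply Real.strictMonoOn_sin
      · constructor <;> [linarith [hx.1, Real.pi_pos]; linarith [hx.2]]
      · constructor <;> [linarith [hy.1, Real.pi_pos]; linarith [hy.2]]
      · exact hxy
    have hs0 : 0 ≤ Real.sin x := by
      apply Real.sin_nonneg_of_nonneg_of_le_pi hx.1
      linarith [hx.2, Real.pi_pos]
    have : Real.sin x ^ 2 < Real.sin y ^ 2 := by nlinarith
    simp only [hφ]
    nlinarith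
  have hinj : InjOn φ (Ioo (0:ℝ) (π/2)) :=
    (hmono.mono (Ioo_subset_Icc_self)).injOn
  -- image
  have hφ0 : φ 0 = a := by simp [hφ]
  have hφπ : φ (π/2) = b := by simp [hφ, Real.sin_pi_div_two, hr]
  have himg : φ '' Ioo (0:ℝ) (π/2) = Ioo a b := by
    apply Subset.antisymm
    · rintro _ ⟨θ, hθ, rfl⟩
      have h01 : 0 < Real.sin θ := Real.sin_pos_of_pos_of_lt_pi hθ.1
        (by linarith [hθ.2, Real.pi_pos])
      have h02 : Real.sin θ < 1 := by
        have hs := Real.strictMonoOn_sin (a := θ) (b := π/2)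
          ⟨by linarith [hθ.1, Real.pi_pos], by linarith [hθ.2]⟩
          ⟨by linarith [Real.pi_pos], le_refl _⟩ hθ.2
        simpa using hs
      have hs2 : Real.sin θ ^ 2 < 1 := by nlinarith
      constructor
      · simp only [hφ]; nlinarith [mul_pos hrpos (pow_pos h01 2)]
      · simp only [hφ]; nlinarith [mul_lt_mul_of_pos_left hs2 hrpos]
    · have hcont : ContinuousOn φ (Icc (0:ℝ) (π/2)) := by
        apply Continuous.continuousOn; continuity
      have := intermediate_value_Ioo hπ2.le hcont
      rw [hφ0, hφπ] at this
      exact this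
  -- change of variables
  have hchg := integral_image_eq_integral_abs_deriv_smul measurableSet_Ioo hder hinj g
  rw [himg] at hchg
  -- pointwise identity on Ioo
  have hptw : ∀ θ ∈ Ioo (0:ℝ) (π/2), |φ' θ| • g (φ θ)
      = 2 * C⁻¹ / ((b * Real.cos θ ^ 2 + a * Real.sin θ ^ 2) *
          Real.sqrt (a * Real.cos θ ^ 2 + b * Real.sin θ ^ 2)) := by
    intro θ hθ
    have h1 := Real.sin_sq_add_cos_sq θ
    have hsθ : 0 < Real.sin θ := Real.sin_pos_of_pos_of_lt_pi hθ.1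
      (by linarith [hθ.2, Real.pi_pos])
    have hcθ : 0 < Real.cos θ := Real.cos_pos_of_mem_Ioo
      ⟨by linarith [hθ.1, Real.pi_pos], hθ.2⟩
    have hN : φ θ = a * Real.cos θ ^ 2 + b * Real.sin θ ^ 2 := by
      simp only [hφ]; linear_combination (-a) * h1 + Real.sin θ ^ 2 * hr
    have hD : 1 - φ θ = b * Real.cos θ ^ 2 + a * Real.sin θ ^ 2 := by
      simp only [hφ]; linear_combination (- Real.sin θ ^ 2) * hr + (-b) * h1 + (-1) * hsum
    have hquad : -(φ θ) ^ 2 + φ θ - C⁻¹ ^ 2 = (r * Real.sin θ * Real.cos θ) ^ 2 := by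
      have e1 : φ θ - a = r * Real.sin θ ^ 2 := by simp only [hφ]; ring
      have e2 : b - φ θ = r * Real.cos θ ^ 2 := by
        simp only [hφ]; linear_combination -hr - r * h1
      have e3 : -(φ θ) ^ 2 + φ θ - C⁻¹ ^ 2 = (φ θ - a) * (b - φ θ) := by
        linear_combination hprod - (φ θ) * hsum
      rw [e3, e1, e2]; ring
    have hNpos : 0 < a * Real.cos θ ^ 2 + b * Real.sin θ ^ 2 := denom_pos' ha hb θ
    have hDpos : 0 < b * Real.cos θ ^ 2 + a * Real.sin θ ^ 2 := denom_pos' hb ha θ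
    have hsqN : 0 < Real.sqrt (a * Real.cos θ ^ 2 + b * Real.sin θ ^ 2) :=
      Real.sqrt_pos.2 hNpos
    have habs : |φ' θ| = r * (2 * Real.sin θ * Real.cos θ) := by
      apply abs_of_pos; simp only [hφ']; positivity
    rw [smul_eq_mul, habs, hg]
    simp only
    rw [hquad, Real.sqrt_sq (by positivity), hD, hN]
    field_simp
  -- assemble
  rw [integral_of_le hab.le, integral_Ioc_eq_integral_Ioo, hchg,
    setIntegral_congr_fun measurableSet_Ioo hptw,
    ← integral_Ioc_eq_integral_Ioo, ← integral_of_le hπ2.le]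

lemma pointwise_core {ε D N : ℝ} (hε : 0 < ε) (hD : 0 < D) (hN : 0 < N)
    (hDN : D + N = 1) :
    2*ε*(D⁻¹+N⁻¹) < 2*ε/(D*Real.sqrt N) + 2*ε/(N*Real.sqrt D) ∧
    2*ε/(D*Real.sqrt N) + 2*ε/(N*Real.sqrt D) ≤ Real.sqrt 2 * (2*ε*(D⁻¹+N⁻¹)) ∧
    (D*N < 4⁻¹ → 2*ε/(D*Real.sqrt N) + 2*ε/(N*Real.sqrt D)
      < Real.sqrt 2 * (2*ε*(D⁻¹+N⁻¹))) := by
  set p := Real.sqrt D with hpdef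
  set q := Real.sqrt N with hqdef
  have hp : 0 < p := Real.sqrt_pos.2 hD
  have hq : 0 < q := Real.sqrt_pos.2 hN
  have hp2 : p ^ 2 = D := Real.sq_sqrt hD.le
  have hq2 : q ^ 2 = N := Real.sq_sqrt hN.le
  have hpq1 : p ^ 2 + q ^ 2 = 1 := by rw [hp2, hq2]; exact hDN
  have hS : 2*ε/(D*q) + 2*ε/(N*p) = 2*ε*(p+q)/(p^2*q^2) := by
    rw [← hp2, ← hq2]; field_simp; ring
  have hT : 2*ε*(D⁻¹+N⁻¹) = 2*ε/(p^2*q^2) := by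
    have h1 : 2*ε*(D⁻¹+N⁻¹) = 2*ε*(D+N)/(D*N) := by field_simp; ring
    rw [h1, hDN, ← hp2, ← hq2]; ring_nf
  have hppq : 0 < p + q := by linarith
  have hpq14 : p^2 * q^2 ≤ 4⁻¹ := by nlinarith [sq_nonneg (p^2 - q^2)]
  have ht1 : 1 < p + q := by nlinarith [mul_pos hp hq]
  have hden : 0 < p^2 * q^2 := by positivity
  have hs2 : Real.sqrt 2 ^ 2 = 2 := Real.sq_sqrt (by norm_num)
  have hs2pos : 0 < Real.sqrt 2 := Real.sqrt_pos.2 (by norm_num)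
  refine ⟨?_, ?_, ?_⟩
  · rw [hS, hT]
    apply (div_lt_div_iff_of_pos_right hden).2
    nlinarith
  · rw [hS, hT]
    have hpq12 : p*q ≤ 2⁻¹ := by nlinarith [mul_pos hp hq, hpq14]
    have hsq : (p+q)^2 ≤ 2 := by nlinarith
    have hle : p + q ≤ Real.sqrt 2 := by
      have h2 := Real.sqrt_le_sqrt hsq
      rwa [Real.sqrt_sq hppq.le] at h2
    rw [show Real.sqrt 2 * (2*ε/(p^2*q^2)) = (Real.sqrt 2 * (2*ε))/(p^2*q^2) from by ring]
    apply (div_le_div_iff_of_pos_right hden).2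
    have h3 := mul_le_mul_of_nonneg_left hle (le_of_lt (show (0:ℝ) < 2*ε by positivity))
    linarith [h3]
  · intro hlt
    rw [hS, hT]
    have hpq' : p * q < 2⁻¹ := by nlinarith [mul_pos hp hq]
    have hsq : (p+q)^2 < 2 := by nlinarith
    have hle : p + q < Real.sqrt 2 := by
      have h2 := Real.sqrt_lt_sqrt (sq_nonneg _) hsq
      rwa [Real.sqrt_sq hppq.le] at h2
    rw [show Real.sqrt 2 * (2*ε/(p^2*q^2)) = (Real.sqrt 2 * (2*ε))/(p^2*q^2) from by ring]
    apply (div_lt_div_iff_of_pos_right hden).2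
    have h3 := mul_lt_mul_of_pos_left hle (show (0:ℝ) < 2*ε by positivity)
    linarith [h3]

lemma theta_bounds (C a b : ℝ) (hC : 2 < C) (ha : 0 < a) (hab : a < b)
    (hsum : a + b = 1) (hprod : a * b = C⁻¹ ^ 2) :
    π < (∫ θ in (0:ℝ)..(π/2), 2 * C⁻¹ / ((b * Real.cos θ ^ 2 + a * Real.sin θ ^ 2) *
          Real.sqrt (a * Real.cos θ ^ 2 + b * Real.sin θ ^ 2))) ∧
    (∫ θ in (0:ℝ)..(π/2), 2 * C⁻¹ / ((b * Real.cos θ ^ 2 + a * Real.sin θ ^ 2) *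
          Real.sqrt (a * Real.cos θ ^ 2 + b * Real.sin θ ^ 2))) < Real.sqrt 2 * π := by
  have hC0 : (0:ℝ) < C := by linarith
  have hb : 0 < b := lt_trans ha hab
  have hπ2 : (0:ℝ) < π / 2 := by positivity
  have hε : 0 < C⁻¹ := inv_pos.2 hC0
  set D : ℝ → ℝ := fun θ => b * Real.cos θ ^ 2 + a * Real.sin θ ^ 2 with hDdef
  set N : ℝ → ℝ := fun θ => a * Real.cos θ ^ 2 + b * Real.sin θ ^ 2 with hNdef
  have hDpos : ∀ θ, 0 < D θ := fun θ => denom_pos' hb ha θ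
  have hNpos : ∀ θ, 0 < N θ := fun θ => denom_pos' ha hb θ
  have hDN1 : ∀ θ, D θ + N θ = 1 := by
    intro θ
    simp only [hDdef, hNdef]
    linear_combination (a + b) * (Real.sin_sq_add_cos_sq θ) + hsum
  -- continuity
  have hcD : Continuous D := by simp only [hDdef]; continuity
  have hcN : Continuous N := by simp only [hNdef]; continuity
  have hcsD : Continuous fun θ => Real.sqrt (D θ) := Real.continuous_sqrt.comp hcD
  have hcsN : Continuous fun θ => Real.sqrt (N θ) := Real.continuous_sqrt.comp hcN
  have hc1 : Continuous fun θ => 2 * C⁻¹ / (D θ * Real.sqrt (N θ)) := by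
    apply continuous_const.div (hcD.mul hcsN)
    exact fun θ => (mul_pos (hDpos θ) (Real.sqrt_pos.2 (hNpos θ))).ne'
  have hc2 : Continuous fun θ => 2 * C⁻¹ / (N θ * Real.sqrt (D θ)) := by
    apply continuous_const.div (hcN.mul hcsD)
    exact fun θ => (mul_pos (hNpos θ) (Real.sqrt_pos.2 (hDpos θ))).ne'
  have hcT : Continuous fun θ => 2 * C⁻¹ * ((D θ)⁻¹ + (N θ)⁻¹) := by
    apply continuous_const.mul
    exact (hcD.inv₀ fun θ => (hDpos θ).ne').add (hcN.inv₀ fun θ => (hNpos θ).ne')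
  -- reflection
  have hrefl : (∫ θ in (0:ℝ)..(π/2), 2 * C⁻¹ / (D θ * Real.sqrt (N θ)))
      = ∫ θ in (0:ℝ)..(π/2), 2 * C⁻¹ / (N θ * Real.sqrt (D θ)) := by
    have h := intervalIntegral.integral_comp_sub_left (a := (0:ℝ)) (b := π/2)
      (fun θ => 2 * C⁻¹ / (D θ * Real.sqrt (N θ))) (π/2)
    rw [sub_self, sub_zero] at h
    rw [← h]
    apply intervalIntegral.integral_congr
    intro x _
    simp only [hDdef, hNdef, Real.cos_pi_div_two_sub, Real.sin_pi_div_two_sub]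
    ring_nf
  -- the symmetrized sum
  have hKsum : (∫ θ in (0:ℝ)..(π/2),
        (2 * C⁻¹ / (D θ * Real.sqrt (N θ)) + 2 * C⁻¹ / (N θ * Real.sqrt (D θ))))
      = 2 * ∫ θ in (0:ℝ)..(π/2), 2 * C⁻¹ / (D θ * Real.sqrt (N θ)) := by
    rw [intervalIntegral.integral_add (hc1.intervalIntegrable _ _) (hc2.intervalIntegrable _ _),
      ← hrefl]
    ring
  -- value of comparison integral
  have hsab : Real.sqrt (a * b) = C⁻¹ := by
    rw [hprod]; exact Real.sqrt_sq hε.le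
  have hsba : Real.sqrt (b * a) = C⁻¹ := by rw [mul_comm]; exact hsab
  have hTval : (∫ θ in (0:ℝ)..(π/2), 2 * C⁻¹ * ((D θ)⁻¹ + (N θ)⁻¹)) = 2 * π := by
    rw [intervalIntegral.integral_const_mul,
      intervalIntegral.integral_add (f := fun θ => (D θ)⁻¹) (g := fun θ => (N θ)⁻¹)
        (((hcD.inv₀ fun θ => (hDpos θ).ne')).intervalIntegrable _ _)
        (((hcN.inv₀ fun θ => (hNpos θ).ne')).intervalIntegrable _ _)]
    have e1 : (∫ θ in (0:ℝ)..(π/2), (D θ)⁻¹) = π / (2 * C⁻¹) := by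
      rw [show (fun θ => (D θ)⁻¹) = fun θ => (b * Real.cos θ ^ 2 + a * Real.sin θ ^ 2)⁻¹ from rfl]
      rw [integral_inv_trig b a hb ha, hsba]
    have e2 : (∫ θ in (0:ℝ)..(π/2), (N θ)⁻¹) = π / (2 * C⁻¹) := by
      rw [show (fun θ => (N θ)⁻¹) = fun θ => (a * Real.cos θ ^ 2 + b * Real.sin θ ^ 2)⁻¹ from rfl]
      rw [integral_inv_trig a b ha hb, hsab]
    rw [e1, e2]
    field_simp
    ring
  -- pointwise facts
  have hptw : ∀ θ, 2 * C⁻¹ * ((D θ)⁻¹ + (N θ)⁻¹)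
      < 2 * C⁻¹ / (D θ * Real.sqrt (N θ)) + 2 * C⁻¹ / (N θ * Real.sqrt (D θ)) :=
    fun θ => (pointwise_core hε (hDpos θ) (hNpos θ) (hDN1 θ)).1
  have hptw2 : ∀ θ, 2 * C⁻¹ / (D θ * Real.sqrt (N θ)) + 2 * C⁻¹ / (N θ * Real.sqrt (D θ))
      ≤ Real.sqrt 2 * (2 * C⁻¹ * ((D θ)⁻¹ + (N θ)⁻¹)) :=
    fun θ => (pointwise_core hε (hDpos θ) (hNpos θ) (hDN1 θ)).2.1
  have hptw3 : 2 * C⁻¹ / (D 0 * Real.sqrt (N 0)) + 2 * C⁻¹ / (N 0 * Real.sqrt (D 0))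
      < Real.sqrt 2 * (2 * C⁻¹ * ((D 0)⁻¹ + (N 0)⁻¹)) := by
    apply (pointwise_core hε (hDpos 0) (hNpos 0) (hDN1 0)).2.2
    have hD0 : D 0 = b := by simp [hDdef]
    have hN0 : N 0 = a := by simp [hNdef]
    rw [hD0, hN0, mul_comm, hprod]
    have : C⁻¹ < 2⁻¹ := by
      rw [inv_lt_inv₀ hC0 (by norm_num)]; exact hC
    calc C⁻¹ ^ 2 < 2⁻¹ ^ 2 := by nlinarith
    _ = 4⁻¹ := by norm_num
  -- strict integral inequalities
  have hlow : (∫ θ in (0:ℝ)..(π/2), 2 * C⁻¹ * ((D θ)⁻¹ + (N θ)⁻¹))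
      < ∫ θ in (0:ℝ)..(π/2),
          (2 * C⁻¹ / (D θ * Real.sqrt (N θ)) + 2 * C⁻¹ / (N θ * Real.sqrt (D θ))) := by
    apply intervalIntegral.integral_lt_integral_of_continuousOn_of_le_of_exists_lt hπ2
      hcT.continuousOn (hc1.add hc2).continuousOn
    · exact fun x _ => (hptw x).le
    · exact ⟨0, ⟨le_refl _, hπ2.le⟩, hptw 0⟩
  have hupp : (∫ θ in (0:ℝ)..(π/2),
        (2 * C⁻¹ / (D θ * Real.sqrt (N θ)) + 2 * C⁻¹ / (N θ * Real.sqrt (D θ))))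
      < ∫ θ in (0:ℝ)..(π/2), Real.sqrt 2 * (2 * C⁻¹ * ((D θ)⁻¹ + (N θ)⁻¹)) := by
    apply intervalIntegral.integral_lt_integral_of_continuousOn_of_le_of_exists_lt hπ2
      (hc1.add hc2).continuousOn (continuous_const.mul hcT).continuousOn
    · exact fun x _ => hptw2 x
    · exact ⟨0, ⟨le_refl _, hπ2.le⟩, hptw3⟩
  have hscal : (∫ θ in (0:ℝ)..(π/2), Real.sqrt 2 * (2 * C⁻¹ * ((D θ)⁻¹ + (N θ)⁻¹)))
      = Real.sqrt 2 * (2 * π) := by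
    rw [intervalIntegral.integral_const_mul, hTval]
  rw [hTval] at hlow
  rw [hscal] at hupp
  rw [hKsum] at hlow hupp
  constructor
  · linarith
  · linarith


/-- For all `C > 2`, the minimal-case period
`K(0,C) = ∫_{x₁}^{x₂} C⁻¹/(√u(1-u)√(-u² + u - C⁻²)) du`, with `x₁ < x₂` the roots of
`u² - u + C⁻² = 0`, satisfies `π < K(0,C) < √2 π`; consequently there is no integer
`m ≥ 2` with `K(0,C) = 2π/m`. -/
theorem stmt16 (C : ℝ) (hC : 2 < C) :
    let x₁ : ℝ := (1 - Real.sqrt (1 - 4 / C ^ 2)) / 2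
    let x₂ : ℝ := (1 + Real.sqrt (1 - 4 / C ^ 2)) / 2
    let K : ℝ := ∫ u in x₁..x₂,
      C⁻¹ / (Real.sqrt u * (1 - u) * Real.sqrt (-u ^ 2 + u - C⁻¹ ^ 2))
    (π < K ∧ K < Real.sqrt 2 * π) ∧ ∀ m : ℕ, 2 ≤ m → K ≠ 2 * π / m := by
  intro x₁ x₂ K
  have hC0 : (0:ℝ) < C := by linarith
  have hC2 : (0:ℝ) < 1 - 4 / C ^ 2 := by
    have h4 : (4:ℝ) < C ^ 2 := by nlinarith
    have h5 : 4 / C ^ 2 < 1 := (div_lt_one (by positivity)).2 h4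
    linarith
  have hr2 : Real.sqrt (1 - 4 / C ^ 2) ^ 2 = 1 - 4 / C ^ 2 := Real.sq_sqrt hC2.le
  have hr0 : 0 < Real.sqrt (1 - 4 / C ^ 2) := Real.sqrt_pos.2 hC2
  have hr1 : Real.sqrt (1 - 4 / C ^ 2) < 1 := by
    nlinarith [hr2, hr0, div_pos (show (0:ℝ) < 4 by norm_num) (show (0:ℝ) < C ^ 2 by positivity)]
  have hsum : x₁ + x₂ = 1 := by unfold x₁ x₂; ring
  have hx12 : x₁ < x₂ := by unfold x₁ x₂; linarith
  have hx1 : 0 < x₁ := by unfold x₁; linarith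
  have hprod : x₁ * x₂ = C⁻¹ ^ 2 := by
    unfold x₁ x₂
    rw [show (1 - Real.sqrt (1 - 4 / C ^ 2)) / 2 * ((1 + Real.sqrt (1 - 4 / C ^ 2)) / 2)
        = (1 - Real.sqrt (1 - 4 / C ^ 2) ^ 2) / 4 from by ring, hr2]
    field_simp
    ring
  have hbound := theta_bounds C x₁ x₂ hC hx1 hx12 hsum hprod
  have hsub := subst_lemma C x₁ x₂ hC0 hx1 hx12 hsum hprod
  have hKlow : π < K := by unfold K; rw [hsub]; exact hbound.1
  have hKhigh : K < Real.sqrt 2 * π := by unfold K; rw [hsub]; exact hbound.2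
  refine ⟨⟨hKlow, hKhigh⟩, ?_⟩
  intro m hm heq
  have hm2 : (2:ℝ) ≤ (m:ℝ) := by exact_mod_cast hm
  have hπ : (0:ℝ) < π := Real.pi_pos
  have hle : 2 * π / (m:ℝ) ≤ 2 * π / 2 :=
    div_le_div_of_nonneg_left (by positivity) (by norm_num) hm2
  rw [heq] at hKlow
  rw [show 2 * π / 2 = π from by ring] at hle
  linarith
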